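/- Let k be a field of characteristic 0 and n ≥ 2 an integer, and let A = kQ/(p₂p₁) be the gentle algebra of the cylinder dissection together with the bilinear map μ̃ determined by μ̃(p₂,p₁) = q̄. Then μ̃ is a Hochschild 2-cocycle of A, i.e. a·μ̃(b,c) − μ̃(a·b,c) + μ̃(a,b·c) − μ̃(a,b)·c = 0 for all a,b,c ∈ A. -/

import Mathlib

/-!
`CylIdx n` indexes the `k`-basis of the gentle algebra `A = kQ/(p₂p₁)` of the cylinder
dissection: the quiver `Q` has vertices `u₀, …, u_{n-1}, v` (encoded as `0, …, n-1, n`),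
arrows `q_i : u_{i-1} → u_i` for `1 ≤ i ≤ n-1`, `p₁ : u₀ → v` and `p₂ : v → u_{n-1}`.
The basis of `A` consists of the trivial paths `e x`, the arrows `p₁`, `p₂`, and the
paths `q i j = q_j ⋯ q_i` for `1 ≤ i ≤ j ≤ n-1`.
-/
inductive CylIdx (n : ℕ) : Type
  | e : (x : ℕ) → x ≤ n → CylIdx n
  | p1 : CylIdx n
  | p2 : CylIdx n
  | q : (i j : ℕ) → 1 ≤ i → i ≤ j → j ≤ n - 1 → CylIdx n

namespace CylIdx

/-- Source vertex of a basis path (vertex `u_x` is encoded `x`, the vertex `v` as `n`). -/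
def src {n : ℕ} : CylIdx n → ℕ
  | e x _ => x
  | p1 => 0
  | p2 => n
  | q i _ _ _ _ => i - 1

/-- Target vertex of a basis path. -/
def tgt {n : ℕ} : CylIdx n → ℕ
  | e x _ => x
  | p1 => n
  | p2 => n - 1
  | q _ j _ _ _ => j

end CylIdx

/-- Structure constants of `A = kQ/(p₂p₁)`: the product `b · a` of two basis paths is a
basis path (the concatenation) or zero; note `p₂ · p₁ = 0` is the gentle relation. -/
def cylMul {n : ℕ} : CylIdx n → CylIdx n → Option (CylIdx n)
  | .e x _, a => if x = a.tgt then some a else none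
  | b, .e x _ => if b.src = x then some b else none
  | .q i' j' _ h2 h3, .q i j g1 g2 _ =>
      if h : i' = j + 1 then some (.q i j' g1 (by omega) h3) else none
  | _, _ => none


set_option maxHeartbeats 4000000 in
set_option maxRecDepth 8000 in
/-- **μ̃ is a Hochschild 2-cocycle** of the gentle algebra `A = kQ/(p₂p₁)` of the
cylinder dissection. -/
theorem cylinder_mu_is_cocycle
    (k : Type*) [Field k] [CharZero k]
    (n : ℕ) (hn : 2 ≤ n)
    (A : Type*) [Ring A] [Algebra k A]
    (B : Module.Basis (CylIdx n) k A)
    (hmul : ∀ b a : CylIdx n, B b * B a = (cylMul b a).elim 0 B)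
    (hone : (1 : A) = ∑ x ∈ (Finset.range (n + 1)).attach,
      B (.e x.1 (by have := Finset.mem_range.mp x.2; omega)))
    (μ : A →ₗ[k] A →ₗ[k] A)
    (hμ1 : μ (B .p2) (B .p1) = B (.q 1 (n - 1) le_rfl (by omega) le_rfl))
    (hμ0 : ∀ b a : CylIdx n, ¬(b = .p2 ∧ a = .p1) → μ (B b) (B a) = 0) :
    ∀ a b c : A, a * μ b c - μ (a * b) c + μ a (b * c) - μ a b * c = 0 := by
  classical
  have key : ∀ i j l : CylIdx n, B i * μ (B j) (B l) - μ (B i * B j) (B l)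
      + μ (B i) (B j * B l) - μ (B i) (B j) * B l = 0 := by
    classical
    have q0 : ∀ a : CylIdx n, ∀ x h, μ (B (CylIdx.e x h)) (B a) = 0 :=
      fun a x h => hμ0 _ _ (by simp)
    have q1 : ∀ a : CylIdx n, μ (B CylIdx.p1) (B a) = 0 := fun a => hμ0 _ _ (by simp)
    have q2 : ∀ a : CylIdx n, ∀ i j h1 h2 h3, μ (B (CylIdx.q i j h1 h2 h3)) (B a) = 0 :=
      fun a i j h1 h2 h3 => hμ0 _ _ (by simp)
    have r0 : ∀ b : CylIdx n, ∀ x h, μ (B b) (B (CylIdx.e x h)) = 0 :=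
      fun b x h => hμ0 _ _ (by simp)
    have r2 : ∀ b : CylIdx n, μ (B b) (B CylIdx.p2) = 0 := fun b => hμ0 _ _ (by simp)
    have r3 : ∀ b : CylIdx n, ∀ i j h1 h2 h3, μ (B b) (B (CylIdx.q i j h1 h2 h3)) = 0 :=
      fun b i j h1 h2 h3 => hμ0 _ _ (by simp)
    intro i j l
    rcases i with ⟨x,hx⟩ | _ | _ | ⟨i1,i2,hi1,hi2,hi3⟩ <;>
      rcases j with ⟨y,hy⟩ | _ | _ | ⟨j1,j2,hj1,hj2,hj3⟩ <;>
      rcases l with ⟨z,hz⟩ | _ | _ | ⟨l1,l2,hl1,hl2,hl3⟩ <;>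
      simp only [hmul, cylMul, CylIdx.src, CylIdx.tgt, q0, q1, q2, r0, r2, r3, hμ1,
        mul_zero, zero_mul, map_zero, LinearMap.zero_apply, sub_zero, zero_sub, add_zero,
        zero_add, neg_zero, sub_self, neg_add_cancel, neg_eq_zero, Option.elim_none, Option.elim_some] <;>
      first
        | rfl
        | (split_ifs <;> (try omega) <;>
            simp only [*, ↓reduceIte, ↓reduceDIte, hmul, cylMul, CylIdx.src, CylIdx.tgt, q0, q1, q2, r0, r2, r3, hμ1,
              mul_zero, zero_mul, map_zero, LinearMap.zero_apply, sub_zero, zero_sub, add_zero,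
              zero_add, neg_zero, sub_self, neg_add_cancel, neg_eq_zero, Option.elim_none, Option.elim_some] <;>
            first
              | rfl
              | omega
              | (split_ifs <;> (try omega) <;>
                  simp only [*, ↓reduceIte, ↓reduceDIte, hmul, cylMul, CylIdx.src, CylIdx.tgt, q0, q1, q2, r0, r2, r3, hμ1,
                    mul_zero, zero_mul, map_zero, LinearMap.zero_apply, sub_zero, zero_sub,
                    add_zero, zero_add, neg_zero, sub_self, neg_add_cancel, neg_eq_zero, Option.elim_none,
                    Option.elim_some] <;>
                  first | rfl | omega))
  have hadd : ∀ a b : A, LinearMap.mulLeft k (a + b) =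
      LinearMap.mulLeft k a + LinearMap.mulLeft k b := by
    intro a b; ext c; simp [add_mul]
  have hsmul : ∀ (r : k) (a : A), LinearMap.mulLeft k (r • a) = r • LinearMap.mulLeft k a := by
    intro r a; ext c; simp [smul_mul_assoc]
  let T : A →ₗ[k] A →ₗ[k] A →ₗ[k] A := LinearMap.mk₂ k
    (fun a b => LinearMap.mulLeft k a ∘ₗ μ b - μ (a * b)
        + μ a ∘ₗ LinearMap.mulLeft k b - LinearMap.mulLeft k (μ a b))
    (by
      intro a a' b; ext c
      simp only [hadd, add_mul, map_add, LinearMap.add_apply, LinearMap.sub_apply,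
        LinearMap.comp_apply, LinearMap.mulLeft_apply]
      abel)
    (by
      intro r a b; ext c
      simp only [hsmul, smul_mul_assoc, map_smul, LinearMap.smul_apply, LinearMap.sub_apply,
        LinearMap.add_apply, LinearMap.comp_apply, LinearMap.mulLeft_apply, smul_sub, smul_add])
    (by
      intro a b b'; ext c
      simp only [hadd, add_mul, mul_add, map_add, LinearMap.add_apply, LinearMap.sub_apply,
        LinearMap.comp_apply, LinearMap.mulLeft_apply]
      abel)
    (by
      intro a r b; ext c
      simp only [hsmul, smul_mul_assoc, mul_smul_comm, map_smul, LinearMap.smul_apply,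
        LinearMap.sub_apply, LinearMap.add_apply, LinearMap.comp_apply,
        LinearMap.mulLeft_apply, smul_sub, smul_add])
  have hT : T = 0 := by
    apply B.ext; intro i
    apply B.ext; intro j
    apply B.ext; intro l
    have := key i j l
    simp only [T, LinearMap.mk₂_apply, LinearMap.sub_apply, LinearMap.add_apply,
      LinearMap.comp_apply, LinearMap.mulLeft_apply, LinearMap.zero_apply]
    linear_combination (norm := abel) this
  intro a b c
  have h := LinearMap.congr_fun (LinearMap.congr_fun (LinearMap.congr_fun hT a) b) c
  simp only [T, LinearMap.mk₂_apply, LinearMap.sub_apply, LinearMap.add_apply,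
    LinearMap.comp_apply, LinearMap.mulLeft_apply, LinearMap.zero_apply] at h
  linear_combination (norm := abel) h
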